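/- Sufficiency of the D_max condition via a measure-and-prepare broadcaster: let F_C = {γ_C} with γ_C full rank with smallest eigenvalue λ₁ and corresponding eigenprojector ψ_C, and let σ_S be any state with D_max(σ_S‖F_S) ≤ −log λ₁, i.e., λ₁σ_S ≤ γ_S for some γ_S ∈ F_S. Define ζ_C := (γ_C − λ₁ψ_C)/(1−λ₁) and ω_S := (γ_S − λ₁σ_S)/(1−λ₁). Then the channel B(ρ_C) := Tr[ψ_C ρ_C](σ_S ⊗ ψ_C) + Tr[(1−ψ_C)ρ_C](ω_S ⊗ ζ_C) is trace-preserving completely positive, satisfies B(ψ_C) = σ_S ⊗ ψ_C (broadcasting σ_S while preserving ψ_C), and B(γ_C) = λ₁(σ_S ⊗ ψ_C) + (1−λ₁)(ω_S ⊗ ζ_C) has marginals γ_S ∈ F_S and γ_C ∈ F_C (so B is RNG with respect to the maximal composition). -/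

import Mathlib

open Matrix Kronecker ComplexOrder

noncomputable section

namespace QIT

/-- Partial trace over the first tensor factor. -/
def trFst {A B : Type*} [Fintype A] (M : Matrix (A × B) (A × B) ℂ) : Matrix B B ℂ :=
  Matrix.of fun b b' => ∑ a, M (a, b) (a, b')

/-- Partial trace over the second tensor factor. -/
def trSnd {A B : Type*} [Fintype B] (M : Matrix (A × B) (A × B) ℂ) : Matrix A A ℂ :=
  Matrix.of fun a a' => ∑ b, M (a, b) (a', b)

/-- A density matrix: positive semidefinite with unit trace. -/
def IsDensity {A : Type*} [Fintype A] (M : Matrix A A ℂ) : Prop :=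
  M.PosSemidef ∧ M.trace = 1

/-- The trace norm ‖M‖₁ = Tr √(MᴴM). -/
def traceNorm {A : Type*} [Fintype A] [DecidableEq A] (M : Matrix A A ℂ) : ℝ :=
  (((Matrix.posSemidef_conjTranspose_mul_self M).1.eigenvectorUnitary : Matrix A A ℂ) *
    Matrix.diagonal (((↑) : ℝ → ℂ) ∘ (√·) ∘ (Matrix.posSemidef_conjTranspose_mul_self M).1.eigenvalues) *
    (star (Matrix.posSemidef_conjTranspose_mul_self M).1.eigenvectorUnitary : Matrix A A ℂ)).trace.re

/-- The extension `id_{Fin k} ⊗ B` of a map on matrices. -/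
def extFun {C D : Type*} (B : Matrix C C ℂ → Matrix D D ℂ) (k : ℕ)
    (M : Matrix (Fin k × C) (Fin k × C) ℂ) : Matrix (Fin k × D) (Fin k × D) ℂ :=
  Matrix.of fun p q => B (Matrix.of fun c c' => M (p.1, c) (q.1, c')) p.2 q.2

/-- Complete positivity: every extension by an identity preserves positive semidefiniteness. -/
def IsCP {C D : Type*} [Fintype C] [Fintype D] (B : Matrix C C ℂ → Matrix D D ℂ) : Prop :=
  ∀ (k : ℕ) (M : Matrix (Fin k × C) (Fin k × C) ℂ), M.PosSemidef → (extFun B k M).PosSemidef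

/-- Trace preservation. -/
def IsTP {C D : Type*} [Fintype C] [Fintype D] (B : Matrix C C ℂ → Matrix D D ℂ) : Prop :=
  ∀ M, (B M).trace = M.trace

/-- A quantum channel: linear, trace-preserving, completely positive. -/
def IsChannel {C D : Type*} [Fintype C] [Fintype D] (B : Matrix C C ℂ → Matrix D D ℂ) : Prop :=
  IsLinearMap ℂ B ∧ IsTP B ∧ IsCP B

/-- Minimal composition of two free-state sets. -/
def minComp {A B : Type*} (FA : Set (Matrix A A ℂ)) (FB : Set (Matrix B B ℂ)) :
    Set (Matrix (A × B) (A × B) ℂ) :=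
  convexHull ℝ {M | ∃ a ∈ FA, ∃ b ∈ FB, M = a ⊗ₖ b}

/-- Maximal composition of two free-state sets: both marginals are free. -/
def maxComp {A B : Type*} [Fintype A] [Fintype B]
    (FA : Set (Matrix A A ℂ)) (FB : Set (Matrix B B ℂ)) :
    Set (Matrix (A × B) (A × B) ℂ) :=
  {M | trSnd M ∈ FA ∧ trFst M ∈ FB}

/-- Separability: convex combination of products of density matrices. -/
def Separable {A B : Type*} [Fintype A] [Fintype B] (M : Matrix (A × B) (A × B) ℂ) : Prop :=
  M ∈ convexHull ℝ {X | ∃ ξ ζ, IsDensity ξ ∧ IsDensity ζ ∧ X = ξ ⊗ₖ ζ}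

/-- Matrix logarithm of a Hermitian matrix via the spectral decomposition. -/
def mlog {A : Type*} [Fintype A] [DecidableEq A] (M : Matrix A A ℂ) : Matrix A A ℂ :=
  if h : M.IsHermitian then
    (Matrix.IsHermitian.eigenvectorUnitary h : Matrix A A ℂ) *
      Matrix.diagonal (fun i => (Real.log (h.eigenvalues i) : ℂ)) *
      (star (Matrix.IsHermitian.eigenvectorUnitary h) : Matrix A A ℂ)
  else 0

/-- Umegaki relative entropy D(ρ‖σ) = Tr[ρ(log ρ − log σ)]. -/
def relEnt {A : Type*} [Fintype A] [DecidableEq A] (ρ σ : Matrix A A ℂ) : ℝ :=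
  ((ρ * (mlog ρ - mlog σ)).trace).re

/-- Reversed relative entropy of resource R̃(ρ) = inf_{γ free} D(γ‖ρ). -/
def revRelEntRes {A : Type*} [Fintype A] [DecidableEq A]
    (F : Set (Matrix A A ℂ)) (ρ : Matrix A A ℂ) : ℝ :=
  sInf {x | ∃ γ ∈ F, x = relEnt γ ρ}

/-- Max-relative entropy of resource. -/
def Dmax {A : Type*} [Fintype A] (ρ : Matrix A A ℂ) (F : Set (Matrix A A ℂ)) : ℝ :=
  sInf {x | ∃ r : ℝ, ∃ ω ∈ F, x = Real.log r ∧ (r • ω - ρ).PosSemidef}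


/-- The extension `Λ ⊗ id_R` of a map on matrices, acting on the first factor. -/
def extFunR {A A' R : Type*} (Λ : Matrix A A ℂ → Matrix A' A' ℂ)
    (M : Matrix (A × R) (A × R) ℂ) : Matrix (A' × R) (A' × R) ℂ :=
  Matrix.of fun p q => Λ (Matrix.of fun a a' => M (a, p.2) (a', q.2)) p.1 q.1


section AuxLemmas

lemma real_smul_matrix {α β : Type*} (r : ℝ) (M : Matrix α β ℂ) : ((r : ℂ) • M) = r • M := by
  ext i j; simp [Complex.real_smul]

lemma psd_smul_real {n : Type*} [Fintype n] {r : ℝ} (hr : 0 ≤ r) {M : Matrix n n ℂ}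
    (hM : M.PosSemidef) : (r • M).PosSemidef := by
  rw [← real_smul_matrix]
  refine Matrix.PosSemidef.of_dotProduct_mulVec_nonneg ?_ ?_
  · rw [Matrix.IsHermitian, Matrix.conjTranspose_smul, hM.1]
    congr 1
    simp [Complex.star_def, Complex.conj_ofReal]
  · intro x
    rw [Matrix.smul_mulVec, dotProduct_smul, smul_eq_mul]
    exact mul_nonneg (Complex.zero_le_real.mpr hr) (hM.dotProduct_mulVec_nonneg x)

lemma kron_conjTranspose {m n : Type*} (A : Matrix m m ℂ) (B : Matrix n n ℂ) :
    (A ⊗ₖ B)ᴴ = Aᴴ ⊗ₖ Bᴴ := by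
  ext ⟨a, b⟩ ⟨c, d⟩
  simp [Matrix.conjTranspose_apply, star_mul']

open scoped MatrixOrder in
lemma psd_kron {m n : Type*} [Fintype m] [Fintype n]
    {A : Matrix m m ℂ} {B : Matrix n n ℂ} (hA : A.PosSemidef) (hB : B.PosSemidef) :
    (A ⊗ₖ B).PosSemidef := by
  classical
  obtain ⟨A', rfl⟩ := CStarAlgebra.nonneg_iff_eq_star_mul_self.mp hA.nonneg
  obtain ⟨B', rfl⟩ := CStarAlgebra.nonneg_iff_eq_star_mul_self.mp hB.nonneg
  rw [Matrix.star_eq_conjTranspose, Matrix.star_eq_conjTranspose, Matrix.mul_kronecker_mul, ← kron_conjTranspose]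
  exact Matrix.posSemidef_conjTranspose_mul_self _

lemma sum5_reorder {k C : Type*} [Fintype k] [Fintype C] (f : k → k → C → C → C → ℂ) :
    (∑ i, ∑ j, ∑ d, ∑ c, ∑ a, f i j d c a) = ∑ a, ∑ i, ∑ c, ∑ j, ∑ d, f i j d c a := by
  have h1 : (∑ p : k × k × C × C × C, f p.1 p.2.1 p.2.2.1 p.2.2.2.1 p.2.2.2.2)
      = ∑ i, ∑ j, ∑ d, ∑ c, ∑ a, f i j d c a := by simp [Fintype.sum_prod_type]
  have h2 : (∑ p : C × k × C × k × C, f p.2.1 p.2.2.2.1 p.2.2.2.2 p.2.2.1 p.1)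
      = ∑ a, ∑ i, ∑ c, ∑ j, ∑ d, f i j d c a := by simp [Fintype.sum_prod_type]
  rw [← h1, ← h2]
  exact Fintype.sum_equiv
    ⟨fun p => (p.2.2.2.2, p.1, p.2.2.2.1, p.2.1, p.2.2.1),
     fun q => (q.2.1, q.2.2.2.1, q.2.2.2.2, q.2.2.1, q.1),
     fun _ => rfl, fun _ => rfl⟩ _ _ (fun p => rfl)

open scoped MatrixOrder in
lemma trace_slice_psd {k C : Type*} [Fintype k] [Fintype C]
    {E : Matrix C C ℂ} (hE : E.PosSemidef)
    {M : Matrix (k × C) (k × C) ℂ} (hM : M.PosSemidef) :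
    (Matrix.of fun i j : k => (E * Matrix.of fun c c' => M (i, c) (j, c')).trace).PosSemidef := by
  have hform : ∀ i j : k, (E * Matrix.of fun c c' => M (i, c) (j, c')).trace
      = ∑ d : C, ∑ c : C, E d c * M (i, c) (j, d) := by
    intro i j
    simp [Matrix.trace, Matrix.diag, Matrix.mul_apply]
  refine Matrix.PosSemidef.of_dotProduct_mulVec_nonneg ?_ ?_
  · ext i j
    simp only [Matrix.conjTranspose_apply, Matrix.of_apply, hform, star_sum, star_mul']
    rw [Finset.sum_comm]
    refine Finset.sum_congr rfl fun d _ => Finset.sum_congr rfl fun c _ => ?_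
    rw [← hE.1.apply, ← hM.1.apply]
    simp [star_star, mul_comm]
  · intro x
    classical
    obtain ⟨F, hF⟩ := CStarAlgebra.nonneg_iff_eq_star_mul_self.mp hE.nonneg
    rw [Matrix.star_eq_conjTranspose] at hF
    have key : dotProduct (star x) ((Matrix.of fun i j : k =>
          (E * Matrix.of fun c c' => M (i, c) (j, c')).trace) *ᵥ x)
        = ∑ a : C, dotProduct (star fun p : k × C => x p.1 * star (F a p.2))
            (M *ᵥ fun p : k × C => x p.1 * star (F a p.2)) := by
      simp only [dotProduct, Matrix.mulVec, Matrix.of_apply, hform]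
      simp only [hF, Matrix.mul_apply, Matrix.conjTranspose_apply, Fintype.sum_prod_type,
        Pi.star_apply, star_mul', star_star, Finset.mul_sum, Finset.sum_mul]
      rw [sum5_reorder]
      exact Finset.sum_congr rfl fun a _ => Finset.sum_congr rfl fun i _ =>
        Finset.sum_congr rfl fun c _ => Finset.sum_congr rfl fun j _ =>
        Finset.sum_congr rfl fun d _ => by ring
    rw [key]
    exact Finset.sum_nonneg fun a _ => hM.dotProduct_mulVec_nonneg _

lemma trSnd_add {A B : Type*} [Fintype B] (M N : Matrix (A × B) (A × B) ℂ) :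
    trSnd (M + N) = trSnd M + trSnd N := by
  ext a a'; simp [trSnd, Finset.sum_add_distrib]

lemma trSnd_smul {A B : Type*} [Fintype B] (c : ℂ) (M : Matrix (A × B) (A × B) ℂ) :
    trSnd (c • M) = c • trSnd M := by
  ext a a'; simp [trSnd, Finset.mul_sum]

lemma trFst_add {A B : Type*} [Fintype A] (M N : Matrix (A × B) (A × B) ℂ) :
    trFst (M + N) = trFst M + trFst N := by
  ext b b'; simp [trFst, Finset.sum_add_distrib]

lemma trFst_smul {A B : Type*} [Fintype A] (c : ℂ) (M : Matrix (A × B) (A × B) ℂ) :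
    trFst (c • M) = c • trFst M := by
  ext b b'; simp [trFst, Finset.mul_sum]

lemma trSnd_kron {A B : Type*} [Fintype B] (X : Matrix A A ℂ) (Y : Matrix B B ℂ) :
    trSnd (X ⊗ₖ Y) = Y.trace • X := by
  ext a a'
  simp only [trSnd, Matrix.of_apply, Matrix.kroneckerMap_apply, Matrix.smul_apply,
    Matrix.trace, Matrix.diag, smul_eq_mul, ← Finset.mul_sum]
  rw [mul_comm]

lemma trFst_kron {A B : Type*} [Fintype A] (X : Matrix A A ℂ) (Y : Matrix B B ℂ) :
    trFst (X ⊗ₖ Y) = X.trace • Y := by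
  ext b b'
  simp only [trFst, Matrix.of_apply, Matrix.kroneckerMap_apply, Matrix.smul_apply,
    Matrix.trace, Matrix.diag, smul_eq_mul]
  rw [Finset.sum_mul]

end AuxLemmas

/-- sufficiency of the `D_max` condition via the measure-and-prepare
broadcaster `B(ρ) = Tr[ψρ](σ ⊗ ψ) + Tr[(1−ψ)ρ](ω ⊗ ζ)`. It is a channel, broadcasts
`σ` while preserving `ψ`, `B(γ_C)` has free marginals `γ_S, γ_C`, and is separable. -/
theorem measure_and_prepare_broadcaster
    {S C : Type*} [Fintype S] [DecidableEq S] [Fintype C] [DecidableEq C]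
    (FS : Set (Matrix S S ℂ))
    (γC : Matrix C C ℂ) (hγCdens : IsDensity γC) (hγCpd : γC.PosDef)
    (lam : ℝ) (hlam0 : 0 < lam) (hlam1 : lam < 1)
    (v : C → ℂ) (hv : (∑ i, Complex.normSq (v i)) = 1)
    (hev : γC *ᵥ v = (lam : ℂ) • v)
    (hmin : ∀ (μ : ℝ) (w : C → ℂ), w ≠ 0 → γC *ᵥ w = (μ : ℂ) • w → lam ≤ μ)
    (σ : Matrix S S ℂ) (hσ : IsDensity σ)
    (γS : Matrix S S ℂ) (hγSfree : γS ∈ FS) (hγSdens : IsDensity γS)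
    (hdom : (γS - lam • σ).PosSemidef) :
    let ψ : Matrix C C ℂ := Matrix.vecMulVec v (star v)
    let ζ : Matrix C C ℂ := (1 - lam)⁻¹ • (γC - lam • ψ)
    let ω : Matrix S S ℂ := (1 - lam)⁻¹ • (γS - lam • σ)
    let B : Matrix C C ℂ → Matrix (S × C) (S × C) ℂ := fun ρ =>
      ((ψ * ρ).trace) • (σ ⊗ₖ ψ) + (((1 - ψ) * ρ).trace) • (ω ⊗ₖ ζ)
    IsDensity ζ ∧ IsDensity ω ∧
    IsChannel B ∧
    B ψ = σ ⊗ₖ ψ ∧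
    B γC = (lam : ℂ) • (σ ⊗ₖ ψ) + ((1 - lam : ℝ) : ℂ) • (ω ⊗ₖ ζ) ∧
    trSnd (B γC) = γS ∧ trFst (B γC) = γC ∧
    Separable (B γC) := by
  intro ψ ζ ω B
  have hγherm : γC.IsHermitian := hγCdens.1.1
  have h1l : (0:ℝ) < 1 - lam := by linarith
  have h1l' : (1:ℝ) - lam ≠ 0 := ne_of_gt h1l
  have hinv : (0:ℝ) ≤ (1 - lam)⁻¹ := inv_nonneg.mpr h1l.le
  -- basic facts about v
  have hvv : (∑ i, star (v i) * v i) = (1 : ℂ) := by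
    have : ∀ z : ℂ, star z * z = ((Complex.normSq z : ℝ) : ℂ) := by
      intro z; rw [Complex.star_def, ← Complex.normSq_eq_conj_mul_self]
    calc (∑ i, star (v i) * v i) = ∑ i, ((Complex.normSq (v i) : ℝ) : ℂ) := by
          exact Finset.sum_congr rfl fun i _ => this (v i)
      _ = (((∑ i, Complex.normSq (v i)) : ℝ) : ℂ) := by push_cast; rfl
      _ = 1 := by rw [hv]; norm_num
  have hψherm : ψ.IsHermitian := by
    ext i j
    simp [ψ, Matrix.conjTranspose_apply, Matrix.vecMulVec_apply, mul_comm]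
  have hψidem : ψ * ψ = ψ := by
    ext i j
    simp only [Matrix.mul_apply, ψ, Matrix.vecMulVec_apply, Pi.star_apply]
    calc ∑ b, v i * star (v b) * (v b * star (v j))
        = (v i * star (v j)) * ∑ b, star (v b) * v b := by
          rw [Finset.mul_sum]; exact Finset.sum_congr rfl fun b _ => by ring
      _ = v i * star (v j) := by rw [hvv, mul_one]
  have hψpsd : ψ.PosSemidef := by
    have h : ψ = ψᴴ * ψ := by rw [hψherm, hψidem]
    rw [h]; exact Matrix.posSemidef_conjTranspose_mul_self ψ
  have hψtr : ψ.trace = 1 := by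
    simp only [Matrix.trace, Matrix.diag, ψ, Matrix.vecMulVec_apply, Pi.star_apply]
    rw [← hvv]
    exact Finset.sum_congr rfl fun i _ => mul_comm _ _
  have h1ψherm : (1 - ψ).IsHermitian := (Matrix.isHermitian_one).sub hψherm
  have h1ψidem : (1 - ψ) * (1 - ψ) = 1 - ψ := by
    simp only [mul_sub, sub_mul, one_mul, mul_one, hψidem]
    abel
  have h1ψpsd : (1 - ψ).PosSemidef := by
    have h : (1 - ψ) = (1 - ψ)ᴴ * (1 - ψ) := by rw [h1ψherm, h1ψidem]
    rw [h]; exact Matrix.posSemidef_conjTranspose_mul_self _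
  -- eigenvalue lower bound
  have hlow : ∀ i, lam ≤ hγherm.eigenvalues i := by
    intro i
    have hne : (⇑(hγherm.eigenvectorBasis i) : C → ℂ) ≠ 0 := by
      intro h
      exact hγherm.eigenvectorBasis.orthonormal.ne_zero i (by ext j; exact congrFun h j)
    have heq : γC *ᵥ ⇑(hγherm.eigenvectorBasis i)
        = ((hγherm.eigenvalues i : ℝ) : ℂ) • ⇑(hγherm.eigenvectorBasis i) := by
      rw [hγherm.mulVec_eigenvectorBasis]
      ext j; simp [Complex.real_smul]
    exact hmin _ _ hne heq
  -- γC - lam • 1 is PSD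
  have hγ1psd : (γC - lam • (1 : Matrix C C ℂ)).PosSemidef := by
    set U : Matrix C C ℂ := (hγherm.eigenvectorUnitary : Matrix C C ℂ) with hU
    have hUU : U * star U = 1 := Matrix.mem_unitaryGroup_iff.mp (hγherm.eigenvectorUnitary).2
    have key : γC - lam • (1 : Matrix C C ℂ)
        = U * Matrix.diagonal (fun i => ((hγherm.eigenvalues i - lam : ℝ) : ℂ)) * Uᴴ := by
      have e1 : Matrix.diagonal (fun i => ((hγherm.eigenvalues i - lam : ℝ) : ℂ))
          = Matrix.diagonal (RCLike.ofReal ∘ hγherm.eigenvalues) - (lam : ℂ) • 1 := by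
        ext i j
        rcases eq_or_ne i j with rfl | h
        · simp only [Matrix.diagonal_apply_eq, Matrix.sub_apply, Matrix.smul_apply,
            Matrix.one_apply_eq, smul_eq_mul, mul_one, Function.comp_apply]
          rw [show ((RCLike.ofReal : ℝ → ℂ) = Complex.ofReal) from rfl]
          push_cast; ring
        · simp [Matrix.diagonal_apply_ne _ h, h]
      rw [← Matrix.star_eq_conjTranspose, e1, Matrix.mul_sub, Matrix.sub_mul]
      conv_lhs => rw [hγherm.spectral_theorem, Unitary.conjStarAlgAut_apply]
      congr 1
      rw [Matrix.mul_smul, Matrix.smul_mul, mul_one, hUU, real_smul_matrix]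
    rw [key, ← Matrix.star_eq_conjTranspose]
    have hd : (Matrix.diagonal (fun i => ((hγherm.eigenvalues i - lam : ℝ) : ℂ))).PosSemidef :=
      Matrix.posSemidef_diagonal_iff.mpr fun i =>
        Complex.zero_le_real.mpr (by linarith [hlow i])
    rw [Matrix.star_eq_conjTranspose]
    exact hd.mul_mul_conjTranspose_same U
  -- ζ is a density matrix
  have hγψpsd : (γC - lam • ψ).PosSemidef := by
    have hsub : γC - lam • ψ = (γC - lam • (1 : Matrix C C ℂ)) + lam • (1 - ψ) := by
      rw [smul_sub]; abel
    rw [hsub]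
    exact hγ1psd.add (psd_smul_real hlam0.le h1ψpsd)
  have hζpsd : ζ.PosSemidef := psd_smul_real hinv hγψpsd
  have hζtr : ζ.trace = 1 := by
    have hC : ((1 - lam : ℝ) : ℂ) ≠ 0 := Complex.ofReal_ne_zero.mpr h1l'
    simp only [ζ, Matrix.trace_smul, Matrix.trace_sub, hγCdens.2, Matrix.trace_smul, hψtr]
    rw [Complex.real_smul, Complex.real_smul, mul_one]
    push_cast at hC ⊢
    field_simp
  have hωpsd : ω.PosSemidef := psd_smul_real hinv hdom
  have hωtr : ω.trace = 1 := by
    have hC : ((1 - lam : ℝ) : ℂ) ≠ 0 := Complex.ofReal_ne_zero.mpr h1l'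
    simp only [ω, Matrix.trace_smul, Matrix.trace_sub, hγSdens.2, hσ.2]
    rw [Complex.real_smul, Complex.real_smul, mul_one]
    push_cast at hC ⊢
    field_simp
  -- trace identities
  have htrψmul : ∀ ρ : Matrix C C ℂ, (ψ * ρ).trace = ∑ c', star (v c') * (ρ *ᵥ v) c' := by
    intro ρ
    simp only [Matrix.trace, Matrix.diag, Matrix.mul_apply, ψ, Matrix.vecMulVec_apply,
      Pi.star_apply, Matrix.mulVec, dotProduct, Finset.mul_sum]
    rw [Finset.sum_comm]
    exact Finset.sum_congr rfl fun c' _ => Finset.sum_congr rfl fun c _ => by ring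
  have hψγtr : (ψ * γC).trace = (lam : ℂ) := by
    rw [htrψmul, hev]
    simp only [Pi.smul_apply, smul_eq_mul]
    calc (∑ c', star (v c') * ((lam : ℂ) * v c'))
        = (lam : ℂ) * ∑ c', star (v c') * v c' := by
          rw [Finset.mul_sum]; exact Finset.sum_congr rfl fun c _ => by ring
      _ = (lam : ℂ) := by rw [hvv, mul_one]
  have h1ψγtr : ((1 - ψ) * γC).trace = ((1 - lam : ℝ) : ℂ) := by
    rw [sub_mul, one_mul, Matrix.trace_sub, hγCdens.2, hψγtr]
    push_cast; ring
  have hψψtr : (ψ * ψ).trace = (1 : ℂ) := by rw [hψidem, hψtr]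
  have h1ψψtr : ((1 - ψ) * ψ).trace = (0 : ℂ) := by
    rw [sub_mul, one_mul, Matrix.trace_sub, hψtr, hψψtr, sub_self]
  have hψdens : IsDensity ψ := ⟨hψpsd, hψtr⟩
  have hζdens : IsDensity ζ := ⟨hζpsd, hζtr⟩
  have hωdens : IsDensity ω := ⟨hωpsd, hωtr⟩
  -- the value of B at γC
  have hBγ : B γC = (lam : ℂ) • (σ ⊗ₖ ψ) + ((1 - lam : ℝ) : ℂ) • (ω ⊗ₖ ζ) := by
    simp only [B, hψγtr, h1ψγtr]
  refine ⟨hζdens, hωdens, ⟨?_, ?_, ?_⟩, ?_, hBγ, ?_, ?_, ?_⟩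
  · -- linearity
    constructor
    · intro ρ₁ ρ₂
      simp only [B, mul_add, Matrix.trace_add, add_smul]
      abel
    · intro c ρ
      simp only [B, Matrix.mul_smul, Matrix.trace_smul, smul_smul, smul_add, smul_eq_mul]
  · -- trace preservation
    intro ρ
    simp only [B, Matrix.trace_add, Matrix.trace_smul, Matrix.trace_kronecker,
      Matrix.trace_kronecker, hσ.2, hψtr, hωtr, hζtr, sub_mul, one_mul, Matrix.trace_sub,
      smul_eq_mul, mul_one]
    ring
  · -- complete positivity
    intro k M hM
    have hexp : extFun B k M =
        (Matrix.of fun i j : Fin k =>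
          (ψ * Matrix.of fun c c' => M (i, c) (j, c')).trace) ⊗ₖ (σ ⊗ₖ ψ) +
        (Matrix.of fun i j : Fin k =>
          ((1 - ψ) * Matrix.of fun c c' => M (i, c) (j, c')).trace) ⊗ₖ (ω ⊗ₖ ζ) := by
      ext ⟨i, p⟩ ⟨j, q⟩
      simp [extFun, B, Matrix.add_apply, Matrix.smul_apply, smul_eq_mul,
        Matrix.kroneckerMap_apply]
    rw [hexp]
    exact (psd_kron (trace_slice_psd hψpsd hM) (psd_kron hσ.1 hψpsd)).add
      (psd_kron (trace_slice_psd h1ψpsd hM) (psd_kron hωpsd hζpsd))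
  · -- B ψ = σ ⊗ₖ ψ
    simp only [B, hψψtr, h1ψψtr, one_smul, zero_smul, add_zero]
  · -- trSnd (B γC) = γS
    rw [hBγ, trSnd_add, trSnd_smul, trSnd_smul, trSnd_kron, trSnd_kron, hψtr, hζtr,
      one_smul, one_smul, real_smul_matrix, real_smul_matrix]
    show lam • σ + (1 - lam) • ((1 - lam)⁻¹ • (γS - lam • σ)) = γS
    rw [smul_smul, mul_inv_cancel₀ h1l', one_smul]
    abel
  · -- trFst (B γC) = γC
    rw [hBγ, trFst_add, trFst_smul, trFst_smul, trFst_kron, trFst_kron, hσ.2, hωtr,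
      one_smul, one_smul, real_smul_matrix, real_smul_matrix]
    show lam • ψ + (1 - lam) • ((1 - lam)⁻¹ • (γC - lam • ψ)) = γC
    rw [smul_smul, mul_inv_cancel₀ h1l', one_smul]
    abel
  · -- separability
    rw [hBγ, real_smul_matrix, real_smul_matrix]
    have hm1 : (σ ⊗ₖ ψ) ∈ {X : Matrix (S × C) (S × C) ℂ |
        ∃ ξ ζ', IsDensity ξ ∧ IsDensity ζ' ∧ X = ξ ⊗ₖ ζ'} := ⟨σ, ψ, hσ, hψdens, rfl⟩
    have hm2 : (ω ⊗ₖ ζ) ∈ {X : Matrix (S × C) (S × C) ℂ |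
        ∃ ξ ζ', IsDensity ξ ∧ IsDensity ζ' ∧ X = ξ ⊗ₖ ζ'} := ⟨ω, ζ, hωdens, hζdens, rfl⟩
    exact (convex_convexHull ℝ _)
      (subset_convexHull ℝ _ hm1)
      (subset_convexHull ℝ _ hm2)
      hlam0.le (by linarith) (by ring)


end QIT
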